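/- For every integer t ≥ 1, the number of 3×3 matrices of integers with all entries strictly between 0 and t (entries not required to be distinct) in which the three row sums, the three column sums, the main-diagonal sum x₁₁+x₂₂+x₃₃, and the antidiagonal sum x₁₃+x₂₂+x₃₁ are all equal, is (t−1)(t²−2t+3)/6 if t is odd and (t−1)(t²−2t+6)/6 if t is even. -/

import Mathlib

open Finset

/- ### Auxiliary definitions -/

/-- The diamond of radius `m`: pairs `(a,b)` with `|a| + |b| ≤ m`. -/
noncomputable def Dm (m : ℕ) : Finset (ℤ × ℤ) :=
  (Finset.Icc (-(m:ℤ)) m).biUnion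
    (fun a => (Finset.Icc (-((m:ℤ) - |a|)) ((m:ℤ) - |a|)).image (fun b => (a, b)))

lemma mem_Dm {m : ℕ} {p : ℤ × ℤ} : p ∈ Dm m ↔ |p.1| + |p.2| ≤ (m:ℤ) := by
  obtain ⟨a, b⟩ := p
  simp only [Dm, mem_biUnion, mem_image, Finset.mem_Icc]
  constructor
  · rintro ⟨a', ⟨h1, h2⟩, b', ⟨h3, h4⟩, h5⟩
    obtain ⟨rfl, rfl⟩ := Prod.mk.injEq .. ▸ h5
    rcases abs_cases a' with ⟨h,_⟩|⟨h,_⟩ <;> rcases abs_cases b' with ⟨h',_⟩|⟨h',_⟩ <;> omega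
  · intro h
    refine ⟨a, ?_, b, ?_, rfl⟩ <;>
    · rcases abs_cases a with ⟨h',_⟩|⟨h',_⟩ <;> rcases abs_cases b with ⟨h'',_⟩|⟨h'',_⟩ <;> omega

lemma card_Dm (m : ℕ) : (Dm m).card = 2*m*m + 2*m + 1 := by
  induction m with
  | zero => decide
  | succ n ih =>
    have hins : (Finset.Icc (-((n:ℤ)+1)) ((n:ℤ)+1))
        = insert (-((n:ℤ)+1)) (insert ((n:ℤ)+1) (Finset.Icc (-(n:ℤ)) n)) := by
      ext x; simp; omega
    have hdisj : ∀ (k : ℕ), ∀ a₁ ∈ Finset.Icc (-(k:ℤ)) k, ∀ a₂ ∈ Finset.Icc (-(k:ℤ)) k, a₁ ≠ a₂ →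
        Disjoint ((Finset.Icc (-((k:ℤ) - |a₁|)) ((k:ℤ) - |a₁|)).image (fun b => (a₁, b)))
          ((Finset.Icc (-((k:ℤ) - |a₂|)) ((k:ℤ) - |a₂|)).image (fun b => (a₂, b))) := by
      intro k a₁ _ a₂ _ hne
      simp only [Finset.disjoint_left, mem_image]
      rintro p ⟨b, _, rfl⟩ ⟨b', _, h⟩
      exact hne (Prod.mk.injEq .. ▸ h).1.symm
    have hcard : ∀ (M a : ℤ),
        ((Finset.Icc (-(M - |a|)) (M - |a|)).image (fun b => (a, b))).card
          = (2*(M - |a|) + 1).toNat := by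
      intro k a
      rw [Finset.card_image_of_injective _ (by intro x y h; exact (Prod.mk.injEq .. ▸ h).2)]
      rw [Int.card_Icc]; congr 1; ring
    rw [Dm, Finset.card_biUnion (hdisj _)] at ih ⊢
    push_cast
    rw [hins, Finset.sum_insert (by simp; try omega), Finset.sum_insert (by simp; try omega)]
    simp only [hcard] at ih ⊢
    have h1 : ((2*(((n:ℤ)+1) - |(-((n:ℤ)+1))|) + 1).toNat) = 1 := by
      rw [abs_of_nonpos (by omega)]; omega
    have h2 : ((2*(((n:ℤ)+1) - |((n:ℤ)+1)|) + 1).toNat) = 1 := by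
      rw [abs_of_nonneg (by omega)]; omega
    rw [h1, h2]
    have h3 : ∑ a ∈ Finset.Icc (-(n:ℤ)) n, (2*(((n:ℤ)+1) - |a|) + 1).toNat
        = ∑ a ∈ Finset.Icc (-(n:ℤ)) n, ((2*((n:ℤ) - |a|) + 1).toNat + 2) := by
      apply Finset.sum_congr rfl
      intro a ha
      simp only [Finset.mem_Icc] at ha
      have : |a| ≤ (n:ℤ) := abs_le.mpr ha
      omega
    rw [h3, Finset.sum_add_distrib, ih, Finset.sum_const, Int.card_Icc]
    have : ((n:ℤ) + 1 - -(n:ℤ)).toNat = 2*n+1 := by omega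
    rw [this]; ring

/-- The standard parametrisation of weak 3×3 magic squares by
(center, two offsets). -/
def psi (p : ℤ × ℤ × ℤ) : Matrix (Fin 3) (Fin 3) ℤ :=
  Matrix.of ![![p.1 + p.2.1, p.1 - p.2.1 - p.2.2, p.1 + p.2.2],
              ![p.1 - p.2.1 + p.2.2, p.1, p.1 + p.2.1 - p.2.2],
              ![p.1 - p.2.2, p.1 + p.2.1 + p.2.2, p.1 - p.2.1]]

lemma psi_inj : Function.Injective psi := by
  rintro ⟨c, a, b⟩ ⟨c', a', b'⟩ h
  have h1 := congrFun (congrFun h 1) 1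
  have h2 := congrFun (congrFun h 0) 0
  have h3 := congrFun (congrFun h 0) 2
  simp [psi] at h1 h2 h3
  refine Prod.ext h1 (Prod.ext ?_ ?_) <;> simp <;> omega

def Pset (t : ℕ) : Set (ℤ × ℤ × ℤ) :=
  {p | 1 ≤ p.1 ∧ p.1 ≤ (t:ℤ) - 1 ∧ |p.2.1| + |p.2.2| ≤ min (p.1 - 1) ((t:ℤ) - 1 - p.1)}

lemma magic_eq_image (t : ℕ) :
    {x : Matrix (Fin 3) (Fin 3) ℤ |
      (∃ s : ℤ, (∀ i, ∑ j, x i j = s) ∧ (∀ j, ∑ i, x i j = s) ∧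
        x 0 0 + x 1 1 + x 2 2 = s ∧ x 0 2 + x 1 1 + x 2 0 = s) ∧
      ∀ i j, 0 < x i j ∧ x i j < (t : ℤ)} = psi '' Pset t := by
  ext x
  constructor
  · rintro ⟨⟨s, hr, hc, hd, ha⟩, hb⟩
    have e0 := hr 0; have e1 := hr 1; have e2 := hr 2
    have f0 := hc 0; have f1 := hc 1; have f2 := hc 2
    simp [Fin.sum_univ_three] at e0 e1 e2 f0 f1 f2
    set c := x 1 1 with hc11
    set a := x 0 0 - x 1 1 with hadef
    set b := x 0 2 - x 1 1 with hbdef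
    have hs : s = 3 * c := by omega
    refine ⟨(c, a, b), ⟨?_, ?_, ?_⟩, ?_⟩
    · have := (hb 1 1); omega
    · have := (hb 1 1); omega
    · have h00 := hb 0 0; have h02 := hb 0 2
      have h20 := hb 2 0; have h22 := hb 2 2
      have h01 := hb 0 1; have h21 := hb 2 1
      have h10 := hb 1 0; have h12 := hb 1 2
      have g22 : x 2 2 = c - a := by omega
      have g20 : x 2 0 = c - b := by omega
      have g01 : x 0 1 = c - a - b := by omega
      have g21 : x 2 1 = c + a + b := by omega
      have g10 : x 1 0 = c - a + b := by omega
      have g12 : x 1 2 = c + a - b := by omega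
      rcases abs_cases a with ⟨h,_⟩|⟨h,_⟩ <;> rcases abs_cases b with ⟨h',_⟩|⟨h',_⟩ <;>
        simp only [le_min_iff] <;> omega
    · funext i j
      fin_cases i <;> fin_cases j <;> simp [psi] <;> omega
  · rintro ⟨⟨c, a, b⟩, ⟨h1, h2, h3⟩, rfl⟩
    simp only [le_min_iff] at h3
    obtain ⟨h3a, h3b⟩ := h3
    rcases abs_cases a with ⟨h,_⟩|⟨h,_⟩ <;> rcases abs_cases b with ⟨h',_⟩|⟨h',_⟩ <;>
    · constructor
      · exact ⟨3 * c, by intro i; fin_cases i <;> simp [psi, Fin.sum_univ_three] <;> ring,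
          by intro j; fin_cases j <;> simp [psi, Fin.sum_univ_three] <;> ring,
          by simp [psi]; ring, by simp [psi]; ring⟩
      · intro i j; fin_cases i <;> fin_cases j <;> simp [psi] <;> omega

def mn (t : ℕ) (c : ℤ) : ℕ := (min (c - 1) ((t:ℤ) - 1 - c)).toNat

noncomputable def Qf (t : ℕ) : Finset (ℤ × ℤ × ℤ) :=
  (Finset.Icc (1:ℤ) ((t:ℤ) - 1)).biUnion (fun c => (Dm (mn t c)).image (fun ab => (c, ab)))

lemma Pset_eq_Qf (t : ℕ) : Pset t = ↑(Qf t) := by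
  ext ⟨c, a, b⟩
  simp only [Pset, Set.mem_setOf_eq, Qf, Finset.coe_biUnion, Set.mem_iUnion,
    Finset.mem_coe, Finset.mem_image, Finset.mem_Icc]
  constructor
  · rintro ⟨h1, h2, h3⟩
    refine ⟨c, ⟨h1, h2⟩, (a, b), mem_Dm.mpr ?_, rfl⟩
    have : (0:ℤ) ≤ min (c - 1) ((t:ℤ) - 1 - c) := by omega
    rw [mn, Int.toNat_of_nonneg this]; exact h3
  · rintro ⟨c', ⟨h1, h2⟩, ⟨a', b'⟩, hd, h⟩
    simp only [Prod.mk.injEq] at h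
    obtain ⟨rfl, rfl, rfl⟩ := h
    have hd' := mem_Dm.mp hd
    have hnn : (0:ℤ) ≤ min (c' - 1) ((t:ℤ) - 1 - c') := by omega
    rw [mn, Int.toNat_of_nonneg hnn] at hd'
    exact ⟨h1, h2, hd'⟩

def gf (m : ℕ) : ℕ := 2*m*m + 2*m + 1

lemma card_Qf (t : ℕ) :
    (Qf t).card = ∑ c ∈ Finset.Icc (1:ℤ) ((t:ℤ) - 1), (2 * mn t c * mn t c + 2 * mn t c + 1) := by
  rw [Qf, Finset.card_biUnion]
  · apply Finset.sum_congr rfl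
    intro c _
    rw [Finset.card_image_of_injective _ (by intro x y h; simpa using h), card_Dm]
  · intro c1 _ c2 _ hne
    simp only [Finset.disjoint_left, Finset.mem_image]
    rintro p ⟨ab, _, rfl⟩ ⟨ab', _, h⟩
    exact hne (Prod.ext_iff.mp h).1.symm

lemma card_Qf' (t : ℕ) :
    (Qf t).card = ∑ c ∈ Finset.range (t - 1), gf (min c (t - 2 - c)) := by
  rw [card_Qf]
  apply Finset.sum_nbij' (fun c : ℤ => (c - 1).toNat) (fun c : ℕ => (c : ℤ) + 1)
  · intro c hc; simp only [Finset.mem_Icc] at hc; simp only [Finset.mem_range]; omega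
  · intro c hc; simp only [Finset.mem_range] at hc; simp only [Finset.mem_Icc]; omega
  · intro c hc; simp only [Finset.mem_Icc] at hc; omega
  · intro c hc; simp only [Finset.mem_range] at hc; omega
  · intro c hc
    simp only [Finset.mem_Icc] at hc
    have : mn t c = min ((c - 1).toNat) (t - 2 - (c - 1).toNat) := by
      rw [mn]; omega
    rw [this, gf]

lemma Gsum (k : ℕ) : 6 * (∑ c ∈ Finset.range k, (gf c : ℤ)) = 4*(k:ℤ)^3 + 2*k := by
  induction k with
  | zero => simp
  | succ n ih =>
    rw [Finset.sum_range_succ, mul_add, ih, gf]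
    push_cast
    ring

lemma Tsum (n : ℕ) : ∑ c ∈ Finset.range (n+1), gf (min c (n - c))
    = ∑ c ∈ Finset.range (n/2 + 1), gf c + ∑ c ∈ Finset.range (n - n/2), gf c := by
  rw [Finset.range_eq_Ico,
    ← Finset.sum_Ico_consecutive _ (by omega : 0 ≤ n/2+1) (by omega : n/2+1 ≤ n+1)]
  congr 1
  · rw [← Finset.range_eq_Ico]
    apply Finset.sum_congr rfl
    intro c hc
    simp only [Finset.mem_range] at hc
    congr 1
    omega
  · refine Finset.sum_nbij' (fun c => n - c) (fun c => n - c) ?_ ?_ ?_ ?_ ?_ <;>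
      intro c hc <;> simp only [Finset.mem_Ico, Finset.mem_range] at hc ⊢ <;>
      try omega
    congr 1
    omega

/-- `WeakMc t` = number of weak 3×3 magic squares (entries not required to be
distinct) all of whose entries lie strictly between 0 and t. -/
noncomputable def WeakMc (t : ℕ) : ℕ :=
  {x : Matrix (Fin 3) (Fin 3) ℤ |
    (∃ s : ℤ, (∀ i, ∑ j, x i j = s) ∧ (∀ j, ∑ i, x i j = s) ∧
      x 0 0 + x 1 1 + x 2 2 = s ∧ x 0 2 + x 1 1 + x 2 0 = s) ∧
    ∀ i j, 0 < x i j ∧ x i j < (t : ℤ)}.ncard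

lemma WeakMc_eq (t : ℕ) : WeakMc t = ∑ c ∈ Finset.range (t - 1), gf (min c (t - 2 - c)) := by
  rw [WeakMc, magic_eq_image, Set.ncard_image_of_injective _ psi_inj, Pset_eq_Qf,
    Set.ncard_coe_finset, card_Qf']

theorem weak_magic_cubic_count (t : ℕ) (ht : 1 ≤ t) :
    (Odd t → 6 * (WeakMc t : ℤ) = ((t : ℤ) - 1) * ((t : ℤ)^2 - 2*(t : ℤ) + 3)) ∧
    (Even t → 6 * (WeakMc t : ℤ) = ((t : ℤ) - 1) * ((t : ℤ)^2 - 2*(t : ℤ) + 6)) := by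
  constructor
  · rintro ⟨k, rfl⟩
    rcases Nat.eq_zero_or_pos k with rfl | hk
    · norm_num [WeakMc_eq]
    · have hW := WeakMc_eq (2*k + 1)
      have hr : 2*k + 1 - 1 = (2*k - 1) + 1 := by omega
      have hn : 2*k + 1 - 2 = 2*k - 1 := by omega
      rw [hr, hn, Tsum] at hW
      have e1 : (2*k - 1)/2 + 1 = k := by omega
      have e2 : (2*k - 1) - (2*k - 1)/2 = k := by omega
      rw [e1, e2] at hW
      rw [hW]
      push_cast
      have := Gsum k
      push_cast at this
      linarith [this]
  · rintro ⟨k, rfl⟩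
    have hk : 1 ≤ k := by omega
    have hW := WeakMc_eq (k + k)
    have hr : k + k - 1 = (k + k - 2) + 1 := by omega
    rw [hr, Tsum] at hW
    have e1 : (k + k - 2)/2 + 1 = k := by omega
    have e2 : (k + k - 2) - (k + k - 2)/2 = k - 1 := by omega
    rw [e1, e2] at hW
    rw [hW]
    have h1 := Gsum k
    have h2 := Gsum (k - 1)
    have hc : ((k - 1 : ℕ) : ℤ) = (k : ℤ) - 1 := by omega
    rw [hc] at h2
    push_cast
    push_cast at h1 h2
    nlinarith [h1, h2]
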